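/- Let A and Z be unital C*-algebras, τ the unique tracial state on A, θ a flow on Z, and θ'_t = id_A ⊗ θ_t the induced flow on A ⊗ Z (minimal tensor product). If ω' is a state on A ⊗ Z such that ω'((a₁⊗1)(a₂⊗b)) = ω'((a₂⊗b)(a₁⊗1)) for all a₁,a₂ ∈ A, b ∈ Z (which holds when ω' is a KMS state for θ' since a⊗1 is θ'-fixed), then ω'(a ⊗ b) = τ(a)·ω(b) for all a ∈ A, b ∈ Z, where ω(b) := ω'(1 ⊗ b) defines a state on Z. -/

import Mathlib

open TensorProduct

/-- If `A` has a unique tracial state `τ` and `ω'` is a state on `A ⊗ Z`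
commuting with the θ'-fixed subalgebra `A ⊗ 1` (i.e. `ω'((a₁⊗1)(a₂⊗b)) = ω'((a₂⊗b)(a₁⊗1))`),
then `ω'(a ⊗ b) = τ(a)·ω(b)` where `ω(b) := ω'(1 ⊗ b)` defines a state on `Z`.
(Positivity of states is expressed on elementary tensors, since
`star(a⊗b)·(a⊗b) = (a*a) ⊗ (b*b)`.) -/
theorem stmt_15 {A Z : Type*}
    [NormedRing A] [StarRing A] [CStarRing A] [NormedAlgebra ℂ A] [StarModule ℂ A]
    [CompleteSpace A]
    [NormedRing Z] [StarRing Z] [CStarRing Z] [NormedAlgebra ℂ Z] [StarModule ℂ Z]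
    [CompleteSpace Z]
    (τ : A →ₗ[ℂ] ℂ) (hτ1 : τ 1 = 1)
    (hτpos : ∀ a : A, 0 ≤ (τ (star a * a)).re ∧ (τ (star a * a)).im = 0)
    (hτtrace : ∀ a b : A, τ (a * b) = τ (b * a))
    (hτunique : ∀ ρ : A →ₗ[ℂ] ℂ, ρ 1 = 1 →
      (∀ a : A, 0 ≤ (ρ (star a * a)).re ∧ (ρ (star a * a)).im = 0) →
      (∀ a b : A, ρ (a * b) = ρ (b * a)) → ρ = τ)
    (ω' : A ⊗[ℂ] Z →ₗ[ℂ] ℂ) (hω'1 : ω' 1 = 1)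
    (hω'pos : ∀ (a : A) (b : Z),
      0 ≤ (ω' ((star a * a) ⊗ₜ[ℂ] (star b * b))).re ∧
        (ω' ((star a * a) ⊗ₜ[ℂ] (star b * b))).im = 0)
    (hcomm : ∀ (a₁ a₂ : A) (b : Z),
      ω' ((a₁ ⊗ₜ[ℂ] (1 : Z)) * (a₂ ⊗ₜ[ℂ] b)) =
        ω' ((a₂ ⊗ₜ[ℂ] b) * (a₁ ⊗ₜ[ℂ] (1 : Z)))) :
    (∀ (a : A) (b : Z), ω' (a ⊗ₜ[ℂ] b) = τ a * ω' ((1 : A) ⊗ₜ[ℂ] b)) ∧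
      ω' ((1 : A) ⊗ₜ[ℂ] (1 : Z)) = 1 ∧
      (∀ b : Z, 0 ≤ (ω' ((1 : A) ⊗ₜ[ℂ] (star b * b))).re ∧
        (ω' ((1 : A) ⊗ₜ[ℂ] (star b * b))).im = 0) := by
  -- Key step: the factorization holds when the second tensor factor is `star c * c`.
  have key : ∀ (c : Z) (a : A),
      ω' (a ⊗ₜ[ℂ] (star c * c)) = τ a * ω' ((1 : A) ⊗ₜ[ℂ] (star c * c)) := by
    intro c a
    set b₀ : Z := star c * c with hb₀
    set k : ℝ := (ω' ((1 : A) ⊗ₜ[ℂ] b₀)).re with hk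
    have hpos1 := hω'pos 1 c
    rw [star_one, one_mul] at hpos1
    have hc₀ : ω' ((1 : A) ⊗ₜ[ℂ] b₀) = (k : ℂ) := by
      apply Complex.ext
      · simp [hk]
      · simp [hb₀, hpos1.2]
    have hkpos : (0 : ℝ) ≤ k := hpos1.1
    have hk1 : (0 : ℝ) < 1 + k := by linarith
    have hcast : (1 : ℂ) + (k : ℂ) = ((1 + k : ℝ) : ℂ) := by push_cast; ring
    have hne : (1 : ℂ) + (k : ℂ) ≠ 0 := by
      rw [hcast]
      exact_mod_cast hk1.ne'
    -- the candidate tracial state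
    set L : A →ₗ[ℂ] ℂ := ω'.comp ((TensorProduct.mk ℂ A Z).flip b₀) with hL
    have hLa : ∀ x : A, L x = ω' (x ⊗ₜ[ℂ] b₀) := fun x => rfl
    set ρ : A →ₗ[ℂ] ℂ := ((1 + (k : ℂ))⁻¹) • (τ + L) with hρ
    have hρa : ∀ x : A, ρ x = (1 + (k : ℂ))⁻¹ * (τ x + ω' (x ⊗ₜ[ℂ] b₀)) := by
      intro x
      simp only [hρ, LinearMap.smul_apply, LinearMap.add_apply, hLa, smul_eq_mul]
      try ring
    have h1 : ρ 1 = 1 := by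
      rw [hρa, hτ1, hc₀]
      field_simp
    have h2 : ∀ x : A, 0 ≤ (ρ (star x * x)).re ∧ (ρ (star x * x)).im = 0 := by
      intro x
      have hτx := hτpos x
      have hωx := hω'pos x c
      rw [hρa, hcast, ← Complex.ofReal_inv]
      constructor
      · simp only [Complex.mul_re, Complex.ofReal_re, Complex.ofReal_im, Complex.add_re,
          Complex.add_im, hτx.2, hωx.2, add_zero, zero_mul, sub_zero]
        have : (0:ℝ) ≤ (1 + k)⁻¹ := by positivity
        exact mul_nonneg this (by linarith [hτx.1, hωx.1])
      · simp [Complex.mul_im, Complex.add_im, hτx.2, hb₀, hωx.2]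
    have h3 : ∀ x y : A, ρ (x * y) = ρ (y * x) := by
      intro x y
      rw [hρa, hρa, hτtrace x y]
      congr 2
      have := hcomm x y b₀
      rw [Algebra.TensorProduct.tmul_mul_tmul, Algebra.TensorProduct.tmul_mul_tmul,
        one_mul, mul_one] at this
      exact this
    have hρτ := hτunique ρ h1 h2 h3
    have := LinearMap.congr_fun hρτ a
    rw [hρa] at this
    rw [hc₀]
    field_simp at this
    linear_combination this
  -- Extend to selfadjoint second factors.
  have sa : ∀ x : Z, IsSelfAdjoint x → ∀ a : A,
      ω' (a ⊗ₜ[ℂ] x) = τ a * ω' ((1 : A) ⊗ₜ[ℂ] x) := by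
    intro x hx a
    have hxd : x = (2⁻¹ : ℂ) • (star (x + 1) * (x + 1)) - (2⁻¹ : ℂ) • (star x * x)
        - (2⁻¹ : ℂ) • (star (1 : Z) * 1) := by
      simp only [star_add, star_one, hx.star_eq]
      rw [add_mul, mul_add, mul_add, mul_one, one_mul, one_mul]
      module
    rw [hxd]
    simp only [TensorProduct.tmul_sub, TensorProduct.tmul_smul, map_sub, map_smul,
      smul_eq_mul]
    rw [key (x + 1) a, key x a, key 1 a]
    ring
  refine ⟨?_, ?_, ?_⟩
  · intro a b
    set x : Z := (2⁻¹ : ℂ) • (b + star b) with hxdef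
    set y : Z := (-(2⁻¹) * Complex.I) • (b - star b) with hydef
    have hxsa : IsSelfAdjoint x := by
      rw [IsSelfAdjoint, hxdef, star_smul, star_add, star_star]
      rw [show (star (2⁻¹ : ℂ)) = (2⁻¹ : ℂ) by
        simp [Complex.conj_ofNat]]
      rw [add_comm]
    have hysa : IsSelfAdjoint y := by
      rw [IsSelfAdjoint, hydef, star_smul, star_sub, star_star]
      rw [show (star (-(2⁻¹) * Complex.I : ℂ)) = (2⁻¹ * Complex.I : ℂ) by
        simp [Complex.conj_ofNat, Complex.conj_I]]
      module
    have hb : b = x + Complex.I • y := by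
      rw [hxdef, hydef, smul_smul,
        show Complex.I * (-(2⁻¹) * Complex.I) = (2⁻¹ : ℂ) by
          linear_combination (-(2⁻¹ : ℂ)) * Complex.I_mul_I]
      module
    rw [hb]
    simp only [TensorProduct.tmul_add, TensorProduct.tmul_smul, map_add, map_smul,
      smul_eq_mul]
    rw [sa x hxsa a, sa y hysa a]
    ring
  · rw [← Algebra.TensorProduct.one_def]
    exact hω'1
  · intro b
    simpa using hω'pos 1 b
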